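/- Fix n > 3. For each i : Fin n let S_i be the permutation of states (Fin n → ZMod 2) that replaces y_i by y_i + 1 when (y_{i−1}, y_{i+1}) = (1, 0) and leaves the state unchanged otherwise (the Wolfram rule 156 local function at i). Let G₁₅₆ be the subgroup of the permutation group of (Fin n → ZMod 2) generated by {S_i ∣ i : Fin n}. Then every orbit of G₁₅₆ on (Fin n → ZMod 2) contains exactly one state that either is the all-ones state or lies in N_A; consequently the number of orbits equals (fib(n+1) + fib(n−1)) + 1, i.e. the n-th Lucas number plus one. -/

import Mathlib

open Finset


open Finset

private lemma zmod2_cases : ∀ a : ZMod 2, a = 0 ∨ a = 1 := by decide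
private lemma zmod2_zero_ne_one : (0 : ZMod 2) ≠ 1 := by decide
private lemma zmod2_one_ne_zero : (1 : ZMod 2) ≠ 0 := by decide

def stmt10lgood {m : ℕ} (f : Fin m → ZMod 2) : Prop :=
  ∀ i j : Fin m, (j : ℕ) = (i : ℕ) + 1 → ¬(f i = 1 ∧ f j = 1)

instance {m : ℕ} : DecidablePred (stmt10lgood (m := m)) := fun _ => by
  unfold stmt10lgood; infer_instance
  try beta_reduce

def stmt10cL (m : ℕ) : ℕ := #(univ.filter (fun f : Fin m → ZMod 2 => stmt10lgood f))

/-- restriction maps -/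
def stmt10res1 {m : ℕ} (f : Fin (m + 2) → ZMod 2) : Fin (m + 1) → ZMod 2 :=
  fun k => f ⟨(k : ℕ) + 1, by omega⟩

def stmt10res2 {m : ℕ} (f : Fin (m + 2) → ZMod 2) : Fin m → ZMod 2 :=
  fun k => f ⟨(k : ℕ) + 2, by omega⟩

/-- extension maps -/
def stmt10ext1 {m : ℕ} (g : Fin (m + 1) → ZMod 2) : Fin (m + 2) → ZMod 2 :=
  fun k => if h : (k : ℕ) = 0 then 0 else g ⟨(k : ℕ) - 1, by omega⟩

def stmt10ext2 {m : ℕ} (g : Fin m → ZMod 2) : Fin (m + 2) → ZMod 2 :=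
  fun k => if hq0 : (k : ℕ) = 0 then 1 else if hq1 : (k : ℕ) = 1 then 0
    else g ⟨(k : ℕ) - 2, by omega⟩

lemma stmt10cL_zero : stmt10cL 0 = 1 := by
  rw [stmt10cL, filter_true_of_mem (fun f _ => by intro i; exact i.elim0)]
  simp

lemma stmt10cL_one : stmt10cL 1 = 2 := by
  rw [stmt10cL, filter_true_of_mem (fun f _ => ?_)]
  · simp
  · intro i j hj
    omega

lemma stmt10card0 (m : ℕ) : #(univ.filter (fun f : Fin (m+2) → ZMod 2 => stmt10lgood f ∧ f 0 = 0))
    = stmt10cL (m + 1) := by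
  rw [stmt10cL]
  refine card_bij' (fun f _ => stmt10res1 f) (fun g _ => stmt10ext1 g) ?_ ?_ ?_ ?_
  · intro f hf
    simp only [mem_filter, mem_univ, true_and] at hf ⊢
    intro a b hab hc
    unfold stmt10res1 at hc
    try beta_reduce at hc
    exact hf.1 ⟨(a : ℕ) + 1, by omega⟩ ⟨(b : ℕ) + 1, by omega⟩ (by simp; omega) hc
  · intro g hg
    simp only [mem_filter, mem_univ, true_and] at hg ⊢
    constructor
    · intro a b hab hc
      unfold stmt10ext1 at hc
      try beta_reduce at hc
      by_cases ha : (a : ℕ) = 0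
      · rw [dif_pos ha] at hc; exact zmod2_zero_ne_one hc.1
      · have hb : ¬ (b : ℕ) = 0 := by omega
        rw [dif_neg ha, dif_neg hb] at hc
        exact hg ⟨(a : ℕ) - 1, by omega⟩ ⟨(b : ℕ) - 1, by omega⟩ (by simp; omega) hc
    · simp [stmt10ext1]
  · intro f hf
    simp only [mem_filter, mem_univ, true_and] at hf
    funext k
    unfold stmt10ext1
    try beta_reduce
    by_cases hk : (k : ℕ) = 0
    · rw [dif_pos hk]
      have hk0 : k = 0 := Fin.ext (by simpa using hk)
      rw [hk0]; exact hf.2.symm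
    · rw [dif_neg hk]; unfold stmt10res1
      exact congrArg f (Fin.ext (by simp; omega))
  · intro g hg
    funext k
    unfold stmt10res1 stmt10ext1
    try beta_reduce
    rw [dif_neg (by simp)]
    exact congrArg g (Fin.ext (by simp))

lemma stmt10card1 (m : ℕ) : #(univ.filter (fun f : Fin (m+2) → ZMod 2 => stmt10lgood f ∧ f 0 = 1))
    = stmt10cL m := by
  rw [stmt10cL]
  refine card_bij' (fun f _ => stmt10res2 f) (fun g _ => stmt10ext2 g) ?_ ?_ ?_ ?_
  · intro f hf
    simp only [mem_filter, mem_univ, true_and] at hf ⊢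
    intro a b hab hc
    unfold stmt10res2 at hc
    try beta_reduce at hc
    exact hf.1 ⟨(a : ℕ) + 2, by omega⟩ ⟨(b : ℕ) + 2, by omega⟩ (by simp; omega) hc
  · intro g hg
    simp only [mem_filter, mem_univ, true_and] at hg ⊢
    constructor
    · intro a b hab hc
      unfold stmt10ext2 at hc
      try beta_reduce at hc
      by_cases ha0 : (a : ℕ) = 0
      · have hb1 : (b : ℕ) = 1 := by omega
        rw [dif_neg (show ¬ (b : ℕ) = 0 by omega), dif_pos hb1] at hc
        exact zmod2_zero_ne_one hc.2
      · by_cases ha1 : (a : ℕ) = 1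
        · rw [dif_neg ha0, dif_pos ha1] at hc
          exact zmod2_zero_ne_one hc.1
        · rw [dif_neg ha0, dif_neg ha1, dif_neg (show ¬ (b : ℕ) = 0 by omega),
            dif_neg (show ¬ (b : ℕ) = 1 by omega)] at hc
          exact hg ⟨(a : ℕ) - 2, by omega⟩ ⟨(b : ℕ) - 2, by omega⟩ (by simp; omega) hc
    · simp [stmt10ext2]
  · intro f hf
    simp only [mem_filter, mem_univ, true_and] at hf
    have hf1 : f 1 = 0 := by
      have h01 := hf.1 0 1 (by simp)
      rcases zmod2_cases (f 1) with h | h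
      · exact h
      · exact absurd ⟨hf.2, h⟩ h01
    funext k
    unfold stmt10ext2
    try beta_reduce
    by_cases hk0 : (k : ℕ) = 0
    · rw [dif_pos hk0]
      have hk : k = 0 := Fin.ext (by simpa using hk0)
      rw [hk]; exact hf.2.symm
    · by_cases hk1 : (k : ℕ) = 1
      · rw [dif_neg hk0, dif_pos hk1]
        have hk : k = 1 := Fin.ext (by simpa using hk1)
        rw [hk]; exact hf1.symm
      · rw [dif_neg hk0, dif_neg hk1]; unfold stmt10res2
        exact congrArg f (Fin.ext (by simp; omega))
  · intro g hg
    funext k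
    unfold stmt10res2 stmt10ext2
    try beta_reduce
    rw [dif_neg (by simp), dif_neg (by simp)]
    exact congrArg g (Fin.ext (by simp))

lemma stmt10cL_rec (m : ℕ) : stmt10cL (m + 2) = stmt10cL (m + 1) + stmt10cL m := by
  classical
  have hsplit : (univ.filter (fun f : Fin (m+2) → ZMod 2 => stmt10lgood f))
      = (univ.filter (fun f : Fin (m+2) → ZMod 2 => stmt10lgood f ∧ f 0 = 0))
        ∪ (univ.filter (fun f : Fin (m+2) → ZMod 2 => stmt10lgood f ∧ f 0 = 1)) := by
    ext f
    simp only [mem_filter, mem_union, mem_univ, true_and]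
    rcases zmod2_cases (f 0) with h | h <;> simp [h] <;> tauto
  have hdisj : Disjoint
      (univ.filter (fun f : Fin (m+2) → ZMod 2 => stmt10lgood f ∧ f 0 = 0))
      (univ.filter (fun f : Fin (m+2) → ZMod 2 => stmt10lgood f ∧ f 0 = 1)) := by
    rw [disjoint_left]
    intro f hf hf'
    simp only [mem_filter] at hf hf'
    exact zmod2_zero_ne_one (hf.2.2 ▸ hf'.2.2)
  rw [stmt10cL, hsplit, card_union_of_disjoint hdisj, stmt10card0, stmt10card1]

lemma stmt10cL_fib (m : ℕ) : stmt10cL m = Nat.fib (m + 2) := by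
  have key : ∀ k, stmt10cL k = Nat.fib (k + 2) ∧ stmt10cL (k + 1) = Nat.fib (k + 3) := by
    intro k
    induction k with
    | zero => exact ⟨by rw [stmt10cL_zero]; rfl, by rw [stmt10cL_one]; rfl⟩
    | succ p ih =>
      refine ⟨ih.2, ?_⟩
      show stmt10cL (p + 2) = Nat.fib (p + 4)
      rw [stmt10cL_rec, ih.1, ih.2]
      have h : Nat.fib (p + 4) = Nat.fib (p + 2) + Nat.fib (p + 3) := Nat.fib_add_two
      omega
  exact (key m).1


lemma stmt10val_add_one (m : ℕ) (i : Fin (m+4)) :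
    ((i + 1 : Fin (m+4)) : ℕ) = if (i : ℕ) = m+3 then 0 else (i : ℕ) + 1 := by
  have h1 : ((1 : Fin (m+4)) : ℕ) = 1 := by
    rw [Fin.val_one']
    exact Nat.mod_eq_of_lt (by omega)
  rw [Fin.val_add, h1]
  split_ifs with h
  · have hx : (i : ℕ) + 1 = m + 4 := by omega
    rw [hx, Nat.mod_self]
  · exact Nat.mod_eq_of_lt (by have := i.isLt; omega)

lemma stmt10add_one_eq (m : ℕ) (i : Fin (m+4)) (x : ℕ) (hx : x < m+4)
    (h1 : (i : ℕ) + 1 = x) (h2 : (i : ℕ) ≠ m+3) : i + 1 = ⟨x, hx⟩ := by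
  apply Fin.ext
  rw [stmt10val_add_one, if_neg h2]
  exact h1

lemma stmt10add_one_last (m : ℕ) (i : Fin (m+4)) (h : (i : ℕ) = m+3) :
    i + 1 = ⟨0, by omega⟩ := by
  apply Fin.ext
  rw [stmt10val_add_one, if_pos h]

def stmt10cres0 {m : ℕ} (z : Fin (m+4) → ZMod 2) : Fin (m+3) → ZMod 2 :=
  fun k => z ⟨(k : ℕ) + 1, by omega⟩
def stmt10cext0 {m : ℕ} (g : Fin (m+3) → ZMod 2) : Fin (m+4) → ZMod 2 :=
  fun k => if h : (k : ℕ) = 0 then 0 else g ⟨(k : ℕ) - 1, by omega⟩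
def stmt10cres1 {m : ℕ} (z : Fin (m+4) → ZMod 2) : Fin (m+1) → ZMod 2 :=
  fun k => z ⟨(k : ℕ) + 2, by omega⟩
def stmt10cext1 {m : ℕ} (g : Fin (m+1) → ZMod 2) : Fin (m+4) → ZMod 2 :=
  fun k => if hq0 : (k : ℕ) = 0 then 1 else if hq1 : (k : ℕ) = 1 ∨ (k : ℕ) = m+3 then 0
    else g ⟨(k : ℕ) - 2, by omega⟩

lemma stmt10cyc0 (m : ℕ) :
    #(univ.filter (fun z : Fin (m+4) → ZMod 2 =>
        (∀ i, ¬(z i = 1 ∧ z (i + 1) = 1)) ∧ z 0 = 0))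
      = stmt10cL (m+3) := by
  rw [stmt10cL]
  refine card_bij' (fun z _ => stmt10cres0 z) (fun g _ => stmt10cext0 g) ?_ ?_ ?_ ?_
  · intro z hz
    simp only [mem_filter, mem_univ, true_and] at hz ⊢
    intro a b hab hc
    unfold stmt10cres0 at hc
    try beta_reduce at hc
    have hb := b.isLt
    have hfin : (⟨(a : ℕ) + 1, by omega⟩ + 1 : Fin (m+4)) = ⟨(b : ℕ) + 1, by omega⟩ :=
      stmt10add_one_eq m _ _ (by omega)
        (by show (a : ℕ) + 1 + 1 = (b : ℕ) + 1; omega)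
        (by show ¬ (a : ℕ) + 1 = m+3; omega)
    have hx := hz.1 ⟨(a : ℕ) + 1, by omega⟩
    rw [hfin] at hx
    exact hx hc
  · intro g hg
    simp only [mem_filter, mem_univ, true_and] at hg ⊢
    constructor
    · intro i hc
      obtain ⟨hc1, hc2⟩ := hc
      by_cases hi0 : (i : ℕ) = 0
      · unfold stmt10cext0 at hc1
        try beta_reduce at hc1
        rw [dif_pos hi0] at hc1
        exact zmod2_zero_ne_one hc1
      · by_cases hil : (i : ℕ) = m+3
        · have hfin : (i + 1 : Fin (m+4)) = ⟨0, by omega⟩ := stmt10add_one_last m i hil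
          rw [hfin] at hc2
          unfold stmt10cext0 at hc2
          try beta_reduce at hc2
          rw [dif_pos rfl] at hc2
          exact zmod2_zero_ne_one hc2
        · have hi4 := i.isLt
          have hfin : (i + 1 : Fin (m+4)) = ⟨(i : ℕ) + 1, by omega⟩ :=
            stmt10add_one_eq m i _ (by omega) rfl hil
          rw [hfin] at hc2
          unfold stmt10cext0 at hc1 hc2
          try beta_reduce at hc1 hc2
          rw [dif_neg hi0] at hc1
          rw [dif_neg (by simp)] at hc2
          refine hg ⟨(i : ℕ) - 1, by omega⟩ ⟨(i : ℕ) + 1 - 1, by omega⟩ (by simp; omega) ⟨hc1, hc2⟩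
    · unfold stmt10cext0
      try beta_reduce
      rw [dif_pos (by simp)]
  · intro z hz
    simp only [mem_filter, mem_univ, true_and] at hz
    funext k
    unfold stmt10cext0
    try beta_reduce
    by_cases hk : (k : ℕ) = 0
    · rw [dif_pos hk]
      have hk0 : k = 0 := Fin.ext (by simpa using hk)
      rw [hk0]
      exact hz.2.symm
    · rw [dif_neg hk]
      unfold stmt10cres0
      exact congrArg z (Fin.ext (by simp; omega))
  · intro g hg
    funext k
    unfold stmt10cres0 stmt10cext0
    try beta_reduce
    rw [dif_neg (by simp)]
    exact congrArg g (Fin.ext (by simp))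

lemma stmt10cyc1 (m : ℕ) :
    #(univ.filter (fun z : Fin (m+4) → ZMod 2 =>
        (∀ i, ¬(z i = 1 ∧ z (i + 1) = 1)) ∧ z 0 = 1))
      = stmt10cL (m+1) := by
  rw [stmt10cL]
  refine card_bij' (fun z _ => stmt10cres1 z) (fun g _ => stmt10cext1 g) ?_ ?_ ?_ ?_
  · intro z hz
    simp only [mem_filter, mem_univ, true_and] at hz ⊢
    intro a b hab hc
    unfold stmt10cres1 at hc
    try beta_reduce at hc
    have hb := b.isLt
    have hfin : (⟨(a : ℕ) + 2, by omega⟩ + 1 : Fin (m+4)) = ⟨(b : ℕ) + 2, by omega⟩ :=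
      stmt10add_one_eq m _ _ (by omega)
        (by show (a : ℕ) + 2 + 1 = (b : ℕ) + 2; omega)
        (by show ¬ (a : ℕ) + 2 = m+3; omega)
    have hx := hz.1 ⟨(a : ℕ) + 2, by omega⟩
    rw [hfin] at hx
    exact hx hc
  · intro g hg
    simp only [mem_filter, mem_univ, true_and] at hg ⊢
    constructor
    · intro i hc
      obtain ⟨hc1, hc2⟩ := hc
      have hi4 := i.isLt
      by_cases hi0 : (i : ℕ) = 0
      · have hfin : (i + 1 : Fin (m+4)) = ⟨1, by omega⟩ :=
          stmt10add_one_eq m i _ (by omega) (by omega) (by omega)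
        rw [hfin] at hc2
        unfold stmt10cext1 at hc2
        try beta_reduce at hc2
        rw [dif_neg (by show ¬(1:ℕ) = 0; omega),
          dif_pos (by show (1:ℕ) = 1 ∨ (1:ℕ) = m+3; exact Or.inl rfl)] at hc2
        exact zmod2_zero_ne_one hc2
      · by_cases hi1 : (i : ℕ) = 1
        · unfold stmt10cext1 at hc1
          try beta_reduce at hc1
          rw [dif_neg hi0, dif_pos (Or.inl hi1)] at hc1
          exact zmod2_zero_ne_one hc1
        · by_cases hil : (i : ℕ) = m+3
          · unfold stmt10cext1 at hc1
            try beta_reduce at hc1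
            rw [dif_neg hi0, dif_pos (Or.inr hil)] at hc1
            exact zmod2_zero_ne_one hc1
          · by_cases hil2 : (i : ℕ) = m+2
            · have hfin : (i + 1 : Fin (m+4)) = ⟨m+3, by omega⟩ :=
                stmt10add_one_eq m i _ (by omega) (by omega) hil
              rw [hfin] at hc2
              unfold stmt10cext1 at hc2
              try beta_reduce at hc2
              rw [dif_neg (by show ¬m+3 = 0; omega),
                dif_pos (by show m+3 = 1 ∨ m+3 = m+3; exact Or.inr rfl)] at hc2
              exact zmod2_zero_ne_one hc2
            · have hfin : (i + 1 : Fin (m+4)) = ⟨(i : ℕ) + 1, by omega⟩ :=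
                stmt10add_one_eq m i _ (by omega) rfl hil
              rw [hfin] at hc2
              unfold stmt10cext1 at hc1 hc2
              try beta_reduce at hc1 hc2
              rw [dif_neg hi0, dif_neg (by simp; omega)] at hc1
              rw [dif_neg (by show ¬(i:ℕ)+1 = 0; omega),
                dif_neg (by show ¬((i:ℕ)+1 = 1 ∨ (i:ℕ)+1 = m+3); omega)] at hc2
              refine hg ⟨(i : ℕ) - 2, by omega⟩ ⟨(i : ℕ) + 1 - 2, by omega⟩
                (by simp; omega) ⟨hc1, hc2⟩
    · unfold stmt10cext1
      try beta_reduce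
      rw [dif_pos (by simp)]
  · intro z hz
    simp only [mem_filter, mem_univ, true_and] at hz
    have hz1 : z ⟨1, by omega⟩ = 0 := by
      have h01 := hz.1 0
      have hfin : ((0 : Fin (m+4)) + 1) = ⟨1, by omega⟩ :=
        stmt10add_one_eq m 0 _ (by omega) (by simp) (by simp)
      rw [hfin] at h01
      rcases zmod2_cases (z ⟨1, by omega⟩) with h | h
      · exact h
      · exact absurd ⟨hz.2, h⟩ h01
    have hzl : z ⟨m+3, by omega⟩ = 0 := by
      have hl := hz.1 ⟨m+3, by omega⟩
      have hfin : ((⟨m+3, by omega⟩ : Fin (m+4)) + 1) = 0 := by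
        have h0 : (0 : Fin (m+4)) = ⟨0, by omega⟩ := Fin.ext (by simp)
        rw [h0]
        exact stmt10add_one_last m _ (by show m+3 = m+3; rfl)
      rw [hfin] at hl
      rcases zmod2_cases (z ⟨m+3, by omega⟩) with h | h
      · exact h
      · exact absurd ⟨h, hz.2⟩ hl
    funext k
    unfold stmt10cext1
    try beta_reduce
    by_cases hk0 : (k : ℕ) = 0
    · rw [dif_pos hk0]
      have hk : k = 0 := Fin.ext (by simpa using hk0)
      rw [hk]
      exact hz.2.symm
    · by_cases hk1 : (k : ℕ) = 1 ∨ (k : ℕ) = m+3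
      · rw [dif_neg hk0, dif_pos hk1]
        rcases hk1 with h | h
        · have hk : k = ⟨1, by omega⟩ := Fin.ext (by simpa using h)
          rw [hk]
          exact hz1.symm
        · have hk : k = ⟨m+3, by omega⟩ := Fin.ext (by simpa using h)
          rw [hk]
          exact hzl.symm
      · rw [dif_neg hk0, dif_neg hk1]
        unfold stmt10cres1
        have hk4 := k.isLt
        exact congrArg z (Fin.ext (by simp; omega))
  · intro g hg
    funext k
    have hk1 := k.isLt
    unfold stmt10cres1 stmt10cext1
    try beta_reduce
    rw [dif_neg (by show ¬(k:ℕ)+2 = 0; omega),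
      dif_neg (by show ¬((k:ℕ)+2 = 1 ∨ (k:ℕ)+2 = m+3); omega)]
    exact congrArg g (Fin.ext (by simp))

lemma stmt10cyccard (m : ℕ) :
    #(univ.filter (fun z : Fin (m+4) → ZMod 2 => ∀ i, ¬(z i = 1 ∧ z (i + 1) = 1)))
      = stmt10cL (m+3) + stmt10cL (m+1) := by
  classical
  have hsplit : (univ.filter (fun z : Fin (m+4) → ZMod 2 => ∀ i, ¬(z i = 1 ∧ z (i + 1) = 1)))
      = (univ.filter (fun z : Fin (m+4) → ZMod 2 =>
          (∀ i, ¬(z i = 1 ∧ z (i + 1) = 1)) ∧ z 0 = 0))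
        ∪ (univ.filter (fun z : Fin (m+4) → ZMod 2 =>
          (∀ i, ¬(z i = 1 ∧ z (i + 1) = 1)) ∧ z 0 = 1)) := by
    ext z
    simp only [mem_filter, mem_union, mem_univ, true_and]
    rcases zmod2_cases (z 0) with h | h <;> simp [h]
  have hdisj : Disjoint
      (univ.filter (fun z : Fin (m+4) → ZMod 2 =>
          (∀ i, ¬(z i = 1 ∧ z (i + 1) = 1)) ∧ z 0 = 0))
      (univ.filter (fun z : Fin (m+4) → ZMod 2 =>
          (∀ i, ¬(z i = 1 ∧ z (i + 1) = 1)) ∧ z 0 = 1)) := by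
    rw [disjoint_left]
    intro z hzl hzr
    simp only [mem_filter] at hzl hzr
    exact zmod2_zero_ne_one (hzl.2.2 ▸ hzr.2.2)
  rw [hsplit, card_union_of_disjoint hdisj, stmt10cyc0, stmt10cyc1]



def stmt10NF {n : ℕ} [NeZero n] (y : Fin n → ZMod 2) : Fin n → ZMod 2 :=
  fun i => if y i = 1 ∧ y (i - 1) = 0 then 1 else 0

lemma stmt10fin_one_ne_zero (m : ℕ) : (1 : Fin (m+4)) ≠ 0 := by
  intro h
  have h2 : ((1 : Fin (m+4)) : ℕ) = ((0 : Fin (m+4)) : ℕ) := congrArg Fin.val h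
  rw [Fin.val_one', Nat.mod_eq_of_lt (by omega)] at h2
  simp at h2

lemma stmt10NF_update (m : ℕ) (y : Fin (m+4) → ZMod 2) (j : Fin (m+4))
    (h1 : y (j - 1) = 1) (h0 : y (j + 1) = 0) :
    stmt10NF (Function.update y j (y j + 1)) = stmt10NF y := by
  have hone := stmt10fin_one_ne_zero m
  have hjj : j - 1 ≠ j := fun h => hone (by
    have := sub_eq_self.mp h
    simpa using this)
  have hj1 : j + 1 ≠ j := fun h => hone (by
    have : j + 1 = j + 0 := by rw [h, add_zero]
    exact add_left_cancel this)
  funext i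
  unfold stmt10NF
  by_cases hij : i = j
  · subst hij
    rw [Function.update_of_ne hjj, Function.update_self]
    have hA : ¬(y i + 1 = 1 ∧ y (i - 1) = 0) := by
      intro h
      rw [h1] at h
      exact zmod2_one_ne_zero h.2
    have hB : ¬(y i = 1 ∧ y (i - 1) = 0) := by
      intro h
      rw [h1] at h
      exact zmod2_one_ne_zero h.2
    rw [if_neg hA, if_neg hB]
  · by_cases hij1 : i = j + 1
    · subst hij1
      rw [Function.update_of_ne hj1]
      have hA : ¬(y (j + 1) = 1 ∧ Function.update y j (y j + 1) (j + 1 - 1) = 0) := by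
        intro h
        rw [h0] at h
        exact zmod2_zero_ne_one h.1
      have hB : ¬(y (j + 1) = 1 ∧ y (j + 1 - 1) = 0) := by
        intro h
        rw [h0] at h
        exact zmod2_zero_ne_one h.1
      rw [if_neg hA, if_neg hB]
    · have hi1 : i - 1 ≠ j := fun h => hij1 (by rw [← h, sub_add_cancel])
      rw [Function.update_of_ne hij, Function.update_of_ne hi1]

open Fin.NatCast in
lemma stmt10find (m : ℕ) (y : Fin (m+4) → ZMod 2) (i0 : Fin (m+4))
    (h1 : y i0 = 1) (h2 : y (i0 + 1) = 1) (k : Fin (m+4)) (hk : y k = 0) :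
    ∃ j : Fin (m+4), y (j - 1) = 1 ∧ y j = 1 ∧ y (j + 1) = 0 := by
  classical
  have hcast : ∀ t : ℕ, ((t + 1 : ℕ) : Fin (m+4)) = ((t : ℕ) : Fin (m+4)) + 1 := by
    intro t
    push_cast
    ring
  have hP : ∃ t : ℕ, y (i0 + ((t + 1 : ℕ) : Fin (m+4))) = 0 := by
    refine ⟨(k - i0).val - 1, ?_⟩
    have hd : (k - i0) ≠ 0 := by
      intro h
      rw [sub_eq_zero] at h
      rw [h, h1] at hk
      exact zmod2_one_ne_zero hk
    have hd1 : 1 ≤ (k - i0).val := by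
      rcases Nat.eq_zero_or_pos (k - i0).val with h | h
      · exact absurd (Fin.ext (by simpa using h)) hd
      · exact h
    have hco : ((k - i0).val - 1 + 1 : ℕ) = (k - i0).val := by omega
    rw [hco, Fin.cast_val_eq_self, add_comm, sub_add_cancel]
    exact hk
  set M := Nat.find hP with hMdef
  have hM : y (i0 + ((M + 1 : ℕ) : Fin (m+4))) = 0 := Nat.find_spec hP
  have hmin : ∀ t, t < M → y (i0 + ((t + 1 : ℕ) : Fin (m+4))) ≠ 0 :=
    fun t ht => Nat.find_min hP ht
  have hM1 : 1 ≤ M := by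
    rcases Nat.eq_zero_or_pos M with h | h
    · exfalso
      rw [h] at hM
      norm_num at hM
      rw [hM] at h2
      exact zmod2_zero_ne_one h2
    · exact h
  have hMc : ((M : ℕ) : Fin (m+4)) = (((M - 1 : ℕ)) : Fin (m+4)) + 1 := by
    rw [← hcast (M - 1)]
    congr 1
    omega
  refine ⟨i0 + ((M : ℕ) : Fin (m+4)), ?_, ?_, ?_⟩
  · rw [hMc, ← add_assoc, add_sub_cancel_right]
    rcases Nat.eq_zero_or_pos (M - 1) with h | h
    · rw [h]
      norm_num
      exact h1
    · have hM2 : (M - 1 : ℕ) = (M - 2) + 1 := by omega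
      rw [hM2]
      rcases zmod2_cases (y (i0 + ((M - 2 + 1 : ℕ) : Fin (m+4)))) with hv | hv
      · exact absurd hv (hmin (M - 2) (by omega))
      · exact hv
  · have hM2 : (M : ℕ) = (M - 1) + 1 := by omega
    rw [hM2]
    rcases zmod2_cases (y (i0 + ((M - 1 + 1 : ℕ) : Fin (m+4)))) with hv | hv
    · exact absurd hv (hmin (M - 1) (by omega))
    · exact hv
  · rw [add_assoc, ← hcast M]
    exact hM

lemma stmt10reach (m : ℕ) (S : Fin (m+4) → Equiv.Perm (Fin (m+4) → ZMod 2))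
    (hS : ∀ (i : Fin (m+4)) (y : Fin (m+4) → ZMod 2),
      S i y = if y (i - 1) = 1 ∧ y (i + 1) = 0
        then Function.update y i (y i + 1) else y) :
    ∀ (w : ℕ) (y : Fin (m+4) → ZMod 2),
      #(univ.filter (fun i => y i = 1)) ≤ w → y ≠ (fun _ => 1) →
      ∃ g ∈ Subgroup.closure (Set.range S),
        ∀ i, ¬((g y) i = 1 ∧ (g y) (i + 1) = 1) := by
  intro w
  induction w with
  | zero =>
    intro y hw hne
    by_cases hNA : ∀ i, ¬(y i = 1 ∧ y (i + 1) = 1)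
    · exact ⟨1, one_mem _, by simpa using hNA⟩
    · exfalso
      push_neg at hNA
      obtain ⟨i0, hi1, hi2⟩ := hNA
      have hmem : i0 ∈ univ.filter (fun i => y i = 1) := mem_filter.mpr ⟨mem_univ _, hi1⟩
      have := card_pos.mpr ⟨i0, hmem⟩
      omega
  | succ w ih =>
    intro y hw hne
    by_cases hNA : ∀ i, ¬(y i = 1 ∧ y (i + 1) = 1)
    · exact ⟨1, one_mem _, by simpa using hNA⟩
    · push_neg at hNA
      obtain ⟨i0, hi1, hi2⟩ := hNA
      have hkex : ∃ k, y k = 0 := by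
        by_contra hco
        push_neg at hco
        apply hne
        funext t
        rcases zmod2_cases (y t) with h | h
        · exact absurd h (hco t)
        · exact h
      obtain ⟨k, hk⟩ := hkex
      obtain ⟨j, hj1, hj2, hj3⟩ := stmt10find m y i0 hi1 hi2 k hk
      have hstep : S j y = Function.update y j 0 := by
        rw [hS, if_pos ⟨hj1, hj3⟩, hj2]
        norm_num
        rfl
      set y' := Function.update y j 0 with hy'
      have hset : univ.filter (fun i => y' i = 1) = (univ.filter (fun i => y i = 1)).erase j := by
        ext t
        simp only [mem_filter, mem_erase, mem_univ, true_and]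
        by_cases htj : t = j
        · subst htj
          rw [hy', Function.update_self]
          simp [zmod2_zero_ne_one]
        · rw [hy', Function.update_of_ne htj]
          simp [htj]
      have hcard : #(univ.filter (fun i => y' i = 1)) ≤ w := by
        have hmemj : j ∈ univ.filter (fun i => y i = 1) := mem_filter.mpr ⟨mem_univ j, hj2⟩
        rw [hset, card_erase_of_mem hmemj]
        omega
      have hne' : y' ≠ fun _ => 1 := by
        intro h
        have hjv := congrFun h j
        rw [hy', Function.update_self] at hjv
        exact zmod2_zero_ne_one hjv
      obtain ⟨g, hg, hgNA⟩ := ih y' hcard hne'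
      refine ⟨g * S j, mul_mem hg (Subgroup.subset_closure ⟨j, rfl⟩), ?_⟩
      have hmul : (g * S j) y = g y' := by rw [Equiv.Perm.mul_apply, hstep]
      rw [hmul]
      exact hgNA

lemma stmt10NF_NA (m : ℕ) (z : Fin (m+4) → ZMod 2)
    (hz : ∀ i, ¬(z i = 1 ∧ z (i + 1) = 1)) : stmt10NF z = z := by
  funext i
  unfold stmt10NF
  rcases zmod2_cases (z i) with h | h
  · rw [h, if_neg (fun hc => zmod2_zero_ne_one hc.1)]
  · have hprev : z (i - 1) = 0 := by
      have hi := hz (i - 1)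
      rw [sub_add_cancel] at hi
      rcases zmod2_cases (z (i - 1)) with h0 | h0
      · exact h0
      · exact absurd ⟨h0, h⟩ hi
    rw [h, hprev, if_pos ⟨rfl, rfl⟩]


set_option synthInstance.maxHeartbeats 1000000 in
/-- For Wolfram rule 156, every orbit of the dynamics group contains
exactly one state that is either the all-ones state or lies in `N_A` (no two
cyclically adjacent 1s); hence the number of orbits is the `n`-th Lucas number
plus one. -/
theorem stmt_10 {n : ℕ} [NeZero n] (hn : 3 < n)
    (S : Fin n → Equiv.Perm (Fin n → ZMod 2))
    (hS : ∀ (i : Fin n) (y : Fin n → ZMod 2),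
      S i y = if y (i - 1) = 1 ∧ y (i + 1) = 0
        then Function.update y i (y i + 1) else y) :
    (∀ y : Fin n → ZMod 2, ∃! z : Fin n → ZMod 2,
      z ∈ MulAction.orbit ↥(Subgroup.closure (Set.range S)) y ∧
        (z = (fun _ => 1) ∨ ∀ i : Fin n, ¬(z i = 1 ∧ z (i + 1) = 1))) ∧
    Nat.card (Quotient (MulAction.orbitRel
        ↥(Subgroup.closure (Set.range S)) (Fin n → ZMod 2)))
      = (Nat.fib (n + 1) + Nat.fib (n - 1)) + 1 := by
  obtain ⟨m, rfl⟩ : ∃ m, n = m + 4 := ⟨n - 4, by omega⟩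
  classical
  have e1 : Nat.fib (m + 3 + 2) = Nat.fib (m + 4 + 1) := congrArg Nat.fib (by omega)
  have e2 : Nat.fib (m + 1 + 2) = Nat.fib (m + 4 - 1) := congrArg Nat.fib (by omega)
  have hgen : ∀ (j : Fin (m+4)) (y : Fin (m+4) → ZMod 2),
      stmt10NF (S j y) = stmt10NF y := by
    intro j y
    rw [hS]
    split_ifs with hc
    · exact stmt10NF_update m y j hc.1 hc.2
    · rfl
  have hNF : ∀ g ∈ Subgroup.closure (Set.range S), ∀ y, stmt10NF (g y) = stmt10NF y := by
    intro g hg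
    refine Subgroup.closure_induction ?_ ?_ ?_ ?_ hg
    · rintro x ⟨i, rfl⟩ y
      exact hgen i y
    · intro y; rfl
    · intro x z hx hz hpx hpz y
      rw [Equiv.Perm.mul_apply, hpx, hpz]
    · intro x hx hpx y
      conv_rhs => rw [← show x (x⁻¹ y) = y from (Equiv.eq_symm_apply x).mp rfl]
      rw [hpx]
  have honesfix : ∀ g ∈ Subgroup.closure (Set.range S),
      g (fun _ => (1 : ZMod 2)) = (fun _ => 1) := by
    intro g hg
    refine Subgroup.closure_induction ?_ ?_ ?_ ?_ hg
    · rintro x ⟨i, rfl⟩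
      rw [hS]
      rw [if_neg (fun hc => zmod2_one_ne_zero hc.2)]
    · rfl
    · intro x z hx hz hpx hpz
      rw [Equiv.Perm.mul_apply, hpz, hpx]
    · intro x hx hpx
      conv_lhs => rw [← hpx]
      exact Equiv.Perm.inv_eq_iff_eq.mpr rfl
  have hsmul : ∀ (g : ↥(Subgroup.closure (Set.range S))) (y : Fin (m+4) → ZMod 2),
      g • y = (g : Equiv.Perm (Fin (m+4) → ZMod 2)) y := fun g y => rfl
  have horbNF : ∀ (y z : Fin (m+4) → ZMod 2),
      z ∈ MulAction.orbit ↥(Subgroup.closure (Set.range S)) y →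
        stmt10NF z = stmt10NF y := by
    rintro y z ⟨g, rfl⟩
    exact hNF _ g.2 y
  have horb_ones : ∀ (y z : Fin (m+4) → ZMod 2),
      z ∈ MulAction.orbit ↥(Subgroup.closure (Set.range S)) y →
        z = (fun _ => 1) → y = (fun _ => 1) := by
    rintro y z ⟨g, rfl⟩ hz
    have hz' : g • y = (fun _ => 1) := hz
    have h1 : y = g⁻¹ • (g • y) := (inv_smul_smul g y).symm
    rw [h1, hz', hsmul]
    exact honesfix _ (g⁻¹).2
  have huniq : ∀ y : Fin (m+4) → ZMod 2, ∃! z : Fin (m+4) → ZMod 2,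
      z ∈ MulAction.orbit ↥(Subgroup.closure (Set.range S)) y ∧
        (z = (fun _ => 1) ∨ ∀ i : Fin (m+4), ¬(z i = 1 ∧ z (i + 1) = 1)) := by
    intro y
    by_cases hy : y = fun _ => 1
    · subst hy
      refine ⟨(fun _ => 1), ⟨MulAction.mem_orbit_self _, Or.inl rfl⟩, ?_⟩
      rintro z ⟨⟨g, rfl⟩, _⟩
      exact honesfix _ g.2
    · obtain ⟨g, hg, hNA⟩ :=
        stmt10reach m S hS (#(univ.filter (fun i => y i = 1))) y le_rfl hy
      refine ⟨g y, ⟨⟨⟨g, hg⟩, rfl⟩, Or.inr hNA⟩, ?_⟩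
      rintro z ⟨hzorb, hzspec⟩
      rcases hzspec with hz1 | hzNA
      · exact absurd (horb_ones y z hzorb hz1) hy
      · have e1 := horbNF y z hzorb
        have e2 := horbNF y (g y) ⟨⟨g, hg⟩, rfl⟩
        calc z = stmt10NF z := (stmt10NF_NA m z hzNA).symm
        _ = stmt10NF y := e1
        _ = stmt10NF (g y) := e2.symm
        _ = g y := stmt10NF_NA m (g y) hNA
  refine ⟨huniq, ?_⟩
  let sel : (Fin (m+4) → ZMod 2) → (Fin (m+4) → ZMod 2) := fun y => (huniq y).choose
  have hsel1 : ∀ y, sel y ∈ MulAction.orbit ↥(Subgroup.closure (Set.range S)) y ∧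
      (sel y = (fun _ => 1) ∨ ∀ i : Fin (m+4), ¬(sel y i = 1 ∧ sel y (i + 1) = 1)) :=
    fun y => (huniq y).choose_spec.1
  have hsel2 : ∀ y z : Fin (m+4) → ZMod 2, (z ∈ MulAction.orbit ↥(Subgroup.closure (Set.range S)) y ∧
      (z = (fun _ => 1) ∨ ∀ i : Fin (m+4), ¬(z i = 1 ∧ z (i + 1) = 1))) → z = sel y :=
    fun y z h => (huniq y).choose_spec.2 z h
  have horbeq : ∀ a b : Fin (m+4) → ZMod 2,
      a ∈ MulAction.orbit ↥(Subgroup.closure (Set.range S)) b →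
      MulAction.orbit ↥(Subgroup.closure (Set.range S)) a
        = MulAction.orbit ↥(Subgroup.closure (Set.range S)) b :=
    fun a b h => MulAction.orbit_eq_iff.mpr h
  have hcongr : ∀ a b : Fin (m+4) → ZMod 2,
      (MulAction.orbitRel ↥(Subgroup.closure (Set.range S)) (Fin (m+4) → ZMod 2)).r a b →
        sel a = sel b := by
    intro a b hab
    have hab' : a ∈ MulAction.orbit ↥(Subgroup.closure (Set.range S)) b := hab
    apply hsel2 b
    refine ⟨?_, (hsel1 a).2⟩
    rw [← horbeq a b hab']
    exact (hsel1 a).1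
  let F : Quotient (MulAction.orbitRel
      ↥(Subgroup.closure (Set.range S)) (Fin (m+4) → ZMod 2)) → (Fin (m+4) → ZMod 2) :=
    Quotient.lift sel (fun a b h => hcongr a b h)
  have hspecF : ∀ c, F c = (fun _ => 1) ∨
      ∀ i : Fin (m+4), ¬(F c i = 1 ∧ F c (i + 1) = 1) := by
    refine Quotient.ind ?_
    intro y
    exact (hsel1 y).2
  let Fs : Quotient (MulAction.orbitRel
      ↥(Subgroup.closure (Set.range S)) (Fin (m+4) → ZMod 2)) →
      {z : Fin (m+4) → ZMod 2 // z = (fun _ => 1) ∨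
        ∀ i : Fin (m+4), ¬(z i = 1 ∧ z (i + 1) = 1)} :=
    fun c => ⟨F c, hspecF c⟩
  have hbij : Function.Bijective Fs := by
    constructor
    · intro c1 c2 h
      obtain ⟨a, rfl⟩ := Quotient.exists_rep c1
      obtain ⟨b, rfl⟩ := Quotient.exists_rep c2
      have hval : sel a = sel b := congrArg Subtype.val h
      apply Quotient.sound
      show a ∈ MulAction.orbit ↥(Subgroup.closure (Set.range S)) b
      have hm : a ∈ MulAction.orbit ↥(Subgroup.closure (Set.range S)) a :=
        MulAction.mem_orbit_self a
      rwa [← horbeq (sel a) a (hsel1 a).1, hval, horbeq (sel b) b (hsel1 b).1] at hm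
    · rintro ⟨z, hz⟩
      refine ⟨Quotient.mk _ z, ?_⟩
      apply Subtype.ext
      show sel z = z
      exact (hsel2 z z ⟨MulAction.mem_orbit_self z, hz⟩).symm
  have hcardq := Nat.card_eq_of_bijective Fs hbij
  rw [hcardq, Nat.card_eq_fintype_card, Fintype.card_subtype]
  have hins : (univ.filter (fun z : Fin (m+4) → ZMod 2 => z = (fun _ => 1) ∨
        ∀ i : Fin (m+4), ¬(z i = 1 ∧ z (i + 1) = 1)))
      = insert (fun _ => (1 : ZMod 2))
          (univ.filter (fun z : Fin (m+4) → ZMod 2 =>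
            ∀ i : Fin (m+4), ¬(z i = 1 ∧ z (i + 1) = 1))) := by
    ext z
    simp only [mem_filter, mem_insert, mem_univ, true_and]
  have hnotmem : (fun _ => (1 : ZMod 2)) ∉
      (univ.filter (fun z : Fin (m+4) → ZMod 2 =>
        ∀ i : Fin (m+4), ¬(z i = 1 ∧ z (i + 1) = 1))) := by
    intro h
    exact (mem_filter.mp h).2 0 ⟨rfl, rfl⟩
  rw [hins, card_insert_of_notMem hnotmem, stmt10cyccard m, stmt10cL_fib, stmt10cL_fib]
  rw [e1, e2]
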